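/- (Theorem 1.) There exist γ₀ > 0 and μ₀ > 0 such that for every γ ∈ [0, γ₀] (so B + γC is invertible) and every step-size sequence (μ_k)_{k≥1} with 0 < μ_k ≤ μ₀ for all k and Σ_{k=1}^∞ μ_k = ∞, the error process satisfies lim_{k→∞} E[e^k] = 0. -/

import Mathlib

open MeasureTheory ProbabilityTheory Matrix Filter

/-- Measurable-space structure on matrices (entrywise). -/
instance matrixMeasurableSpace {m n α : Type*} [MeasurableSpace α] :
    MeasurableSpace (Matrix m n α) := MeasurableSpace.pi (X := fun _ : m => n → α)

/-- The Euclidean norm of a vector. -/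
noncomputable def euclNorm {ι : Type*} [Fintype ι] (v : ι → ℝ) : ℝ :=
  Real.sqrt (∑ i, (v i) ^ 2)

/-- The Frobenius norm of a matrix. -/
noncomputable def frobNorm {ι κ : Type*} [Fintype ι] [Fintype κ] (F : Matrix ι κ ℝ) : ℝ :=
  Real.sqrt (∑ i, ∑ j, (F i j) ^ 2)

/-- Entrywise expectation of a random vector. -/
noncomputable def Evec {Ω' : Type*} [MeasurableSpace Ω'] (P : Measure Ω') {ι : Type*}
    (F : Ω' → ι → ℝ) : ι → ℝ := fun i => ∫ ω, F ω i ∂P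

/-- Entrywise expectation of a random matrix. -/
noncomputable def Emat {Ω' : Type*} [MeasurableSpace Ω'] (P : Measure Ω') {ι κ : Type*}
    (F : Ω' → Matrix ι κ ℝ) : Matrix ι κ ℝ := Matrix.of fun i j => ∫ ω, F ω i j ∂P

/-- Entrywise integrability of a random vector. -/
def IntV {Ω' : Type*} [MeasurableSpace Ω'] (P : Measure Ω') {ι : Type*}
    (F : Ω' → ι → ℝ) : Prop := ∀ i, Integrable (fun ω => F ω i) P

/-- Entrywise integrability of a random matrix. -/
def IntM {Ω' : Type*} [MeasurableSpace Ω'] (P : Measure Ω') {ι κ : Type*}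
    (F : Ω' → Matrix ι κ ℝ) : Prop := ∀ i j, Integrable (fun ω => F ω i j) P

/-- `vec(P) vec(Q)ᵀ`, with `vec` stacking the columns of a square matrix. -/
def vecOuter {M : ℕ} (P Q : Matrix (Fin M) (Fin M) ℝ) :
    Matrix (Fin M × Fin M) (Fin M × Fin M) ℝ :=
  Matrix.of fun p q => P p.1 p.2 * Q q.1 q.2

/-- `vec(P) vᵀ` for a square matrix `P` and a vector `v`. -/
def vecOuterVec {M : ℕ} (P : Matrix (Fin M) (Fin M) ℝ) (v : Fin M → ℝ) :
    Matrix (Fin M × Fin M) (Fin M) ℝ :=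
  Matrix.of fun p i => P p.1 p.2 * v i

/-- Theorem 1: there exist `γ₀ > 0` and `μ₀ > 0` such that for every
`γ ∈ [0, γ₀]` (so `B + γC` is invertible) and every step-size sequence with
`0 < μ_k ≤ μ₀` and `Σ μ_k = ∞`, the error process satisfies `lim_k E[e^k] = 0`. -/
lemma mulVec_sq_sum_le {M : ℕ} (G : Matrix (Fin M) (Fin M) ℝ) (v : Fin M → ℝ) :
    ∑ i, (G.mulVec v i) ^ 2 ≤ (∑ i, ∑ j, (G i j) ^ 2) * ∑ j, (v j) ^ 2 := by
  rw [Finset.sum_mul]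
  refine Finset.sum_le_sum fun i _ => ?_
  rw [show G.mulVec v i = ∑ j, G i j * v j from rfl]
  exact Finset.sum_mul_sq_le_sq_mul_sq _ _ _

lemma quadform_abs_le {M : ℕ} {D : Matrix (Fin M) (Fin M) ℝ} {ε : ℝ}
    (hε : ∀ i j, |D i j| ≤ ε) (x : Fin M → ℝ) :
    |x ⬝ᵥ D.mulVec x| ≤ ε * M * ∑ i, (x i) ^ 2 := by
  rcases Nat.eq_zero_or_pos M with hMz | hMpos
  · subst hMz
    simp [dotProduct]
  have h1 : |x ⬝ᵥ D.mulVec x| ≤ ∑ i, ∑ j, |x i| * (ε * |x j|) := by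
    refine (Finset.abs_sum_le_sum_abs _ _).trans ?_
    refine Finset.sum_le_sum fun i _ => ?_
    rw [show x i * D.mulVec x i = ∑ j, x i * (D i j * x j) by
      simp [Matrix.mulVec, dotProduct, Finset.mul_sum]]
    refine (Finset.abs_sum_le_sum_abs _ _).trans (Finset.sum_le_sum fun j _ => ?_)
    rw [abs_mul, abs_mul]
    exact mul_le_mul_of_nonneg_left (by
      exact mul_le_mul_of_nonneg_right (hε i j) (abs_nonneg _)) (abs_nonneg _)
  refine h1.trans ?_
  have h2 : ∑ i, ∑ j, |x i| * (ε * |x j|) = ε * (∑ i, |x i|) ^ 2 := by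
    simp only [← Finset.mul_sum, ← Finset.sum_mul]
    ring
  rw [h2]
  have h3 : (∑ i, |x i|) ^ 2 ≤ (M : ℝ) * ∑ i, (x i) ^ 2 := by
    have := sq_sum_le_card_mul_sum_sq (s := (Finset.univ : Finset (Fin M))) (f := fun i => |x i|)
    simpa [sq_abs] using this
  have hε0 : 0 ≤ ε := (abs_nonneg _).trans (hε ⟨0, hMpos⟩ ⟨0, hMpos⟩)
  calc ε * (∑ i, |x i|) ^ 2 ≤ ε * ((M : ℝ) * ∑ i, (x i) ^ 2) :=
        mul_le_mul_of_nonneg_left h3 hε0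
    _ = ε * M * ∑ i, (x i) ^ 2 := by ring

lemma sum_sq_nonneg' {M : ℕ} (v : Fin M → ℝ) : (0:ℝ) ≤ ∑ i, (v i)^2 :=
  Finset.sum_nonneg fun i _ => sq_nonneg _

lemma step_ineq {M : ℕ} (G : Matrix (Fin M) (Fin M) ℝ) (lam L μv : ℝ)
    (hquad : ∀ x : Fin M → ℝ, lam * ∑ i, (x i)^2 ≤ x ⬝ᵥ G.mulVec x)
    (hL : ∑ i, ∑ j, (G i j)^2 ≤ L)
    (hμ : 0 ≤ μv) (hμL : μv * L ≤ lam) (v : Fin M → ℝ) :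
    ∑ i, (((1 : Matrix (Fin M) (Fin M) ℝ) - μv • G).mulVec v i)^2
      ≤ (1 - μv * lam) * ∑ i, (v i)^2 := by
  have hw : ∀ i, ((1 : Matrix (Fin M) (Fin M) ℝ) - μv • G).mulVec v i
      = v i - μv * G.mulVec v i := by
    intro i
    rw [Matrix.sub_mulVec, Matrix.smul_mulVec, Matrix.one_mulVec]
    simp
  have expand : ∑ i, (((1 : Matrix (Fin M) (Fin M) ℝ) - μv • G).mulVec v i)^2
      = ∑ i, (v i)^2 - 2*μv * (∑ i, v i * G.mulVec v i) + μv^2 * ∑ i, (G.mulVec v i)^2 := by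
    simp only [hw]
    rw [show (∑ i, (v i - μv * G.mulVec v i)^2)
        = ∑ i, ((v i)^2 - 2*μv*(v i * G.mulVec v i) + μv^2*(G.mulVec v i)^2) from
      Finset.sum_congr rfl fun i _ => by ring]
    rw [Finset.sum_add_distrib, Finset.sum_sub_distrib, ← Finset.mul_sum, ← Finset.mul_sum]
  rw [expand]
  have hq : lam * ∑ i, (v i)^2 ≤ ∑ i, v i * G.mulVec v i := hquad v
  have hw2 : ∑ i, (G.mulVec v i)^2 ≤ L * ∑ i, (v i)^2 :=
    (mulVec_sq_sum_le G v).trans (mul_le_mul_of_nonneg_right hL (sum_sq_nonneg' v))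
  have hS : (0:ℝ) ≤ ∑ i, (v i)^2 := sum_sq_nonneg' v
  nlinarith [mul_le_mul_of_nonneg_left hq (by linarith : (0:ℝ) ≤ 2*μv),
    mul_le_mul_of_nonneg_left hw2 (sq_nonneg μv),
    mul_le_mul_of_nonneg_right (mul_le_mul_of_nonneg_left hμL hμ) hS]

lemma exists_lam {M : ℕ} (hM : 0 < M) (G : Matrix (Fin M) (Fin M) ℝ)
    (h : ∀ x : Fin M → ℝ, euclNorm x = 1 → 0 < x ⬝ᵥ G.mulVec x) :
    ∃ lam : ℝ, 0 < lam ∧ ∀ x : Fin M → ℝ, lam * ∑ i, (x i)^2 ≤ x ⬝ᵥ G.mulVec x := by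
  classical
  have hcont : Continuous (fun x : Fin M → ℝ => x ⬝ᵥ G.mulVec x) := by
    have : (fun x : Fin M → ℝ => x ⬝ᵥ G.mulVec x)
        = fun x => ∑ i, x i * ∑ j, G i j * x j := rfl
    rw [this]
    exact continuous_finset_sum _ fun i _ => (continuous_apply i).mul
      (continuous_finset_sum _ fun j _ => (continuous_const.mul (continuous_apply j)))
  set S : Set (Fin M → ℝ) := {x | euclNorm x = 1} with hSdef
  have hnormcont : Continuous (euclNorm : (Fin M → ℝ) → ℝ) := by
    unfold euclNorm
    exact (continuous_finset_sum _ fun i _ => (continuous_apply i).pow 2).sqrt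
  have hclosed : IsClosed S := isClosed_eq hnormcont continuous_const
  have habs_le : ∀ x : Fin M → ℝ, ∀ i, |x i| ≤ euclNorm x := by
    intro x i
    rw [show |x i| = Real.sqrt ((x i)^2) from (Real.sqrt_sq_eq_abs _).symm]
    exact Real.sqrt_le_sqrt (Finset.single_le_sum (f := fun i => (x i)^2)
      (fun i _ => sq_nonneg _) (Finset.mem_univ i))
  have hbdd : Bornology.IsBounded S := by
    refine (Metric.isBounded_iff_subset_closedBall 0).2 ⟨1, fun x hx => ?_⟩
    have hx1 : euclNorm x = 1 := hx
    rw [Metric.mem_closedBall, dist_pi_le_iff zero_le_one]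
    intro i
    simpa [Real.dist_eq] using (habs_le x i).trans_eq hx1
  have hcompact : IsCompact S := Metric.isCompact_of_isClosed_isBounded hclosed hbdd
  have hne : S.Nonempty := by
    refine ⟨fun j => if j = ⟨0, hM⟩ then 1 else 0, ?_⟩
    show euclNorm _ = 1
    unfold euclNorm
    rw [show (∑ i, ((fun j => if j = (⟨0, hM⟩ : Fin M) then (1:ℝ) else 0) i)^2) = 1 by
      simp [apply_ite (fun t : ℝ => t^2)]]
    exact Real.sqrt_one
  obtain ⟨x0, hx0S, hx0min⟩ := hcompact.exists_isMinOn hne hcont.continuousOn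
  refine ⟨x0 ⬝ᵥ G.mulVec x0, h x0 hx0S, ?_⟩
  intro x
  by_cases hx : ∑ i, (x i)^2 = 0
  · have hx0' : x = 0 := by
      funext i
      have := (Finset.sum_eq_zero_iff_of_nonneg (fun i _ => sq_nonneg (x i))).1 hx i
        (Finset.mem_univ i)
      exact pow_eq_zero_iff (n := 2) (by norm_num) |>.1 this
    rw [hx0']
    simp
  · have hpos : 0 < ∑ i, (x i)^2 := lt_of_le_of_ne (sum_sq_nonneg' x) (Ne.symm hx)
    set c := Real.sqrt (∑ i, (x i)^2) with hcdef
    have hc : 0 < c := Real.sqrt_pos.2 hpos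
    have hc2 : c^2 = ∑ i, (x i)^2 := Real.sq_sqrt hpos.le
    set u := c⁻¹ • x with hudef
    have hu : u ∈ S := by
      show euclNorm u = 1
      unfold euclNorm
      have : ∑ i, (u i)^2 = c⁻¹^2 * ∑ i, (x i)^2 := by
        simp [hudef, mul_pow, Finset.mul_sum]
      rw [this, ← hc2]
      rw [show c⁻¹^2 * c^2 = 1 by field_simp]
      exact Real.sqrt_one
    have hmin := isMinOn_iff.1 hx0min u hu
    have hxcu : x = c • u := by
      rw [hudef, smul_smul, mul_inv_cancel₀ hc.ne', one_smul]
    have hQ : x ⬝ᵥ G.mulVec x = c^2 * (u ⬝ᵥ G.mulVec u) := by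
      rw [hxcu, Matrix.mulVec_smul, smul_dotProduct, dotProduct_smul,
        smul_eq_mul, smul_eq_mul]
      ring
    rw [hQ, ← hc2]
    calc (x0 ⬝ᵥ G.mulVec x0) * c^2 ≤ (u ⬝ᵥ G.mulVec u) * c^2 :=
          mul_le_mul_of_nonneg_right hmin (sq_nonneg c)
      _ = c^2 * (u ⬝ᵥ G.mulVec u) := by ring

lemma Evec_rec {Ω' : Type} [MeasurableSpace Ω'] (P : Measure Ω') [IsProbabilityMeasure P]
    {M : ℕ} (Ψ A : Matrix (Fin M) (Fin M) ℝ) (uhat : Fin M → ℝ)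
    (θ' : Ω' → Fin M → ℝ) (W' : Ω' → Matrix (Fin M) (Fin M) ℝ)
    (e' f : Ω' → Fin M → ℝ) (μv : ℝ)
    (hθint : IntV P θ') (hθmean : Evec P θ' = 0)
    (hWint : IntM P W') (hWmean : Emat P W' = 0)
    (hrec : ∀ ω, f ω = (1 - μv • (Ψ * (A + W' ω))).mulVec (e' ω)
        + μv • Ψ.mulVec (θ' ω - (W' ω).mulVec uhat))
    (hindep : IndepFun (fun ω => (θ' ω, W' ω)) e' P)
    (heint : IntV P e') :
    Evec P f = (1 - μv • (Ψ * A)).mulVec (Evec P e') := by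
  classical
  set N := (1 : Matrix (Fin M) (Fin M) ℝ) - μv • (Ψ * A) with hN
  -- independence of entries
  have hWe_indep : ∀ l j j', IndepFun (fun ω => W' ω l j) (fun ω => e' ω j') P := by
    intro l j j'
    exact hindep.comp
      (φ := fun p : ((Fin M → ℝ) × Matrix (Fin M) (Fin M) ℝ) => p.2 l j)
      (ψ := fun v : Fin M → ℝ => v j')
      ((measurable_pi_apply j).comp ((measurable_pi_apply l).comp measurable_snd)) (measurable_pi_apply j')
  have hprod_int : ∀ l j j', Integrable (fun ω => W' ω l j * e' ω j') P := by
    intro l j j'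
    exact (hWe_indep l j j').integrable_mul (hWint l j) (heint j')
  have hW0 : ∀ l j, ∫ ω, W' ω l j ∂P = 0 := by
    intro l j
    have := congrFun (congrFun (congrArg (fun (X : Matrix (Fin M) (Fin M) ℝ) => X) hWmean) l) j
    simpa [Emat] using this
  have hprod_zero : ∀ l j j', ∫ ω, W' ω l j * e' ω j' ∂P = 0 := by
    intro l j j'
    have h := (hWe_indep l j j').integral_mul_eq_mul_integral (hWint l j).aestronglyMeasurable (heint j').aestronglyMeasurable
    simp only [Pi.mul_apply] at h
    rw [show (fun ω => W' ω l j * e' ω j') = (fun ω => W' ω l j) * (fun ω => e' ω j') from rfl]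
    exact h.trans (by rw [hW0 l j, zero_mul])
  have keyv : ∀ ω, f ω = N.mulVec (e' ω) + ((-μv) • Ψ.mulVec ((W' ω).mulVec (e' ω))
      + (μv • Ψ.mulVec (θ' ω) + (-μv) • Ψ.mulVec ((W' ω).mulVec uhat))) := by
    intro ω
    rw [hrec ω, Matrix.mul_add, smul_add, sub_add_eq_sub_sub, Matrix.sub_mulVec,
      Matrix.smul_mulVec, Matrix.mulVec_mulVec, Matrix.mulVec_sub, smul_sub, ← hN]
    module
  -- integrability of the four pieces (at component i)
  funext i
  have hint1 : Integrable (fun ω => N.mulVec (e' ω) i) P := by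
    have : (fun ω => N.mulVec (e' ω) i) = fun ω => ∑ j, N i j * e' ω j := rfl
    rw [this]
    exact integrable_finset_sum _ fun j _ => (heint j).const_mul _
  have hint2' : ∀ l, Integrable (fun ω => (W' ω).mulVec (e' ω) l) P := by
    intro l
    have : (fun ω => (W' ω).mulVec (e' ω) l) = fun ω => ∑ j, W' ω l j * e' ω j := rfl
    rw [this]
    exact integrable_finset_sum _ fun j _ => hprod_int l j j
  have hint2 : Integrable (fun ω => Ψ.mulVec ((W' ω).mulVec (e' ω)) i) P := by
    have : (fun ω => Ψ.mulVec ((W' ω).mulVec (e' ω)) i)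
        = fun ω => ∑ l, Ψ i l * (W' ω).mulVec (e' ω) l := rfl
    rw [this]
    exact integrable_finset_sum _ fun l _ => (hint2' l).const_mul _
  have hint3 : Integrable (fun ω => Ψ.mulVec (θ' ω) i) P := by
    have : (fun ω => Ψ.mulVec (θ' ω) i) = fun ω => ∑ j, Ψ i j * θ' ω j := rfl
    rw [this]
    exact integrable_finset_sum _ fun j _ => (hθint j).const_mul _
  have hint4' : ∀ l, Integrable (fun ω => (W' ω).mulVec uhat l) P := by
    intro l
    have : (fun ω => (W' ω).mulVec uhat l) = fun ω => ∑ j, W' ω l j * uhat j := rfl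
    rw [this]
    exact integrable_finset_sum _ fun j _ => (hWint l j).mul_const _
  have hint4 : Integrable (fun ω => Ψ.mulVec ((W' ω).mulVec uhat) i) P := by
    have : (fun ω => Ψ.mulVec ((W' ω).mulVec uhat) i)
        = fun ω => ∑ l, Ψ i l * (W' ω).mulVec uhat l := rfl
    rw [this]
    exact integrable_finset_sum _ fun l _ => (hint4' l).const_mul _
  -- integrals of the pieces
  have hI1 : ∫ ω, N.mulVec (e' ω) i ∂P = N.mulVec (Evec P e') i := by
    have : (fun ω => N.mulVec (e' ω) i) = fun ω => ∑ j, N i j * e' ω j := rfl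
    rw [this, integral_finset_sum _ fun j _ => (heint j).const_mul _]
    simp only [integral_const_mul]
    rfl
  have hI2 : ∫ ω, Ψ.mulVec ((W' ω).mulVec (e' ω)) i ∂P = 0 := by
    have h : (fun ω => Ψ.mulVec ((W' ω).mulVec (e' ω)) i)
        = fun ω => ∑ l, Ψ i l * ∑ j, W' ω l j * e' ω j := rfl
    rw [h, integral_finset_sum _ fun l _ => ((integrable_finset_sum _
      fun j _ => hprod_int l j j).const_mul _)]
    refine Finset.sum_eq_zero fun l _ => ?_
    rw [integral_const_mul, integral_finset_sum _ fun j _ => hprod_int l j j]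
    rw [Finset.sum_eq_zero fun j _ => hprod_zero l j j, mul_zero]
  have hI3 : ∫ ω, Ψ.mulVec (θ' ω) i ∂P = 0 := by
    have h : (fun ω => Ψ.mulVec (θ' ω) i) = fun ω => ∑ j, Ψ i j * θ' ω j := rfl
    rw [h, integral_finset_sum _ fun j _ => (hθint j).const_mul _]
    refine Finset.sum_eq_zero fun j _ => ?_
    rw [integral_const_mul]
    have : ∫ ω, θ' ω j ∂P = 0 := by
      have := congrFun hθmean j; simpa [Evec] using this
    rw [this, mul_zero]
  have hI4 : ∫ ω, Ψ.mulVec ((W' ω).mulVec uhat) i ∂P = 0 := by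
    have h : (fun ω => Ψ.mulVec ((W' ω).mulVec uhat) i)
        = fun ω => ∑ l, Ψ i l * ∑ j, W' ω l j * uhat j := rfl
    rw [h, integral_finset_sum _ fun l _ => ((integrable_finset_sum _
      fun j _ => (hWint l j).mul_const _).const_mul _)]
    refine Finset.sum_eq_zero fun l _ => ?_
    rw [integral_const_mul, integral_finset_sum _ fun j _ => (hWint l j).mul_const _]
    rw [Finset.sum_eq_zero fun j _ => by rw [integral_mul_const, hW0 l j, zero_mul], mul_zero]
  -- put together
  have : (fun ω => f ω i) = fun ω => N.mulVec (e' ω) i + ((-μv) * Ψ.mulVec ((W' ω).mulVec (e' ω)) i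
      + (μv * Ψ.mulVec (θ' ω) i + (-μv) * Ψ.mulVec ((W' ω).mulVec uhat) i)) := by
    funext ω
    rw [keyv ω]
    simp [Pi.add_apply, Pi.smul_apply, smul_eq_mul]
  show ∫ ω, f ω i ∂P = _
  rw [this]
  rw [integral_add (f := fun ω => (N *ᵥ e' ω) i)
    (g := fun ω => -μv * (Ψ *ᵥ W' ω *ᵥ e' ω) i + (μv * (Ψ *ᵥ θ' ω) i + -μv * (Ψ *ᵥ W' ω *ᵥ uhat) i))
    hint1 ((hint2.const_mul (-μv)).add ((hint3.const_mul μv).add (hint4.const_mul (-μv))))]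
  rw [integral_add (f := fun ω => -μv * (Ψ *ᵥ W' ω *ᵥ e' ω) i)
    (g := fun ω => μv * (Ψ *ᵥ θ' ω) i + -μv * (Ψ *ᵥ W' ω *ᵥ uhat) i)
    (hint2.const_mul (-μv)) ((hint3.const_mul μv).add (hint4.const_mul (-μv)))]
  rw [integral_add (f := fun ω => μv * (Ψ *ᵥ θ' ω) i) (g := fun ω => -μv * (Ψ *ᵥ W' ω *ᵥ uhat) i)
    (hint3.const_mul μv) (hint4.const_mul (-μv))]
  rw [integral_const_mul, integral_const_mul, integral_const_mul, hI1, hI2, hI3, hI4]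
  ring

lemma exists_gamma_bound {M : ℕ} (B C A : Matrix (Fin M) (Fin M) ℝ) (hB : IsUnit B.det)
    (ε : ℝ) (hε : 0 < ε) :
    ∃ γ₀ : ℝ, 0 < γ₀ ∧ ∀ γ : ℝ, 0 ≤ γ → γ ≤ γ₀ →
      IsUnit (B + γ • C).det ∧
      ∀ i j, |((B + γ • C)⁻¹ * A) i j - (B⁻¹ * A) i j| ≤ ε := by
  classical
  have hBC : Continuous (fun γ : ℝ => B + γ • C) :=
    continuous_const.add (continuous_id.smul continuous_const)
  have hdet : Tendsto (fun γ : ℝ => (B + γ • C).det) (nhds 0) (nhds B.det) := by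
    have h := (hBC.matrix_det).tendsto 0
    simpa using h
  have hdetne : ∀ᶠ γ in nhds (0:ℝ), (B + γ • C).det ≠ 0 :=
    hdet.eventually_ne hB.ne_zero
  have hGA : ContinuousAt (fun γ : ℝ => (B + γ • C)⁻¹ * A) 0 := by
    have h1 : ContinuousAt Inv.inv ((fun γ : ℝ => B + γ • C) 0) := by
      simpa using continuousAt_matrix_inv B (NormedRing.inverse_continuousAt hB.unit)
    have h2 : ContinuousAt (fun γ : ℝ => (B + γ • C)⁻¹) 0 :=
      ContinuousAt.comp h1 hBC.continuousAt
    exact ContinuousAt.comp (x := (0:ℝ))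
      (f := fun γ : ℝ => (B + γ • C)⁻¹) (g := fun X => X * A)
      ((continuous_id.matrix_mul continuous_const).continuousAt) h2
  have h4 : Tendsto (fun γ : ℝ => (B + γ • C)⁻¹ * A) (nhds 0) (nhds (B⁻¹ * A)) := by
    have := hGA.tendsto
    simpa using this
  have hall : ∀ᶠ γ in nhds (0:ℝ), ∀ i j, |((B + γ • C)⁻¹ * A) i j - (B⁻¹ * A) i j| ≤ ε := by
    rw [eventually_all]
    intro i
    rw [eventually_all]
    intro j
    have h2 : Tendsto (fun γ : ℝ => ((B + γ • C)⁻¹ * A) i j) (nhds 0)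
        (nhds ((B⁻¹ * A) i j)) := by
      have h6 := ((continuous_apply i).tendsto (B⁻¹ * A)).comp h4
      have h7 := ((continuous_apply j).tendsto ((B⁻¹ * A) i)).comp h6
      exact h7
    have h3 := h2 (Metric.closedBall_mem_nhds ((B⁻¹ * A) i j) hε)
    refine Filter.mem_of_superset h3 fun γ hγ => ?_
    simpa [Metric.mem_closedBall, Real.dist_eq] using hγ
  obtain ⟨δ, hδ, hδprop⟩ := Metric.eventually_nhds_iff.1 (hdetne.and hall)
  refine ⟨δ/2, by linarith, fun γ hγ0 hγδ => ?_⟩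
  have hγ : dist γ 0 < δ := by
    rw [Real.dist_eq, sub_zero, abs_of_nonneg hγ0]; linarith
  obtain ⟨h1, h2⟩ := hδprop hγ
  exact ⟨isUnit_iff_ne_zero.2 h1, h2⟩

theorem theorem1_mean_convergence
    {M : ℕ} {Ω' : Type} [MeasurableSpace Ω'] (P : Measure Ω') [IsProbabilityMeasure P]
    (A B C : Matrix (Fin M) (Fin M) ℝ)
    (hA : A.PosDef)
    (hBsymm : B.IsSymm) (hBinv : IsUnit B)
    (hBA : ∀ x : Fin M → ℝ, euclNorm x = 1 → 0 < x ⬝ᵥ (B⁻¹ * A).mulVec x)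
    (hC : C.PosSemidef)
    (uhat : Fin M → ℝ)
    (θ : ℕ → Ω' → Fin M → ℝ) (W : ℕ → Ω' → Matrix (Fin M) (Fin M) ℝ)
    (hWsymm : ∀ k ω, (W k ω).IsSymm)
    (hθint : ∀ k, IntV P (θ k)) (hθmean : ∀ k, 1 ≤ k → Evec P (θ k) = 0)
    (hWint : ∀ k, IntM P (W k)) (hWmean : ∀ k, 1 ≤ k → Emat P (W k) = 0) :
    ∃ γ₀ : ℝ, 0 < γ₀ ∧ ∃ μ₀ : ℝ, 0 < μ₀ ∧
      ∀ γ : ℝ, 0 ≤ γ → γ ≤ γ₀ →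
        IsUnit (B + γ • C) ∧
        ∀ μ : ℕ → ℝ, (∀ k, 1 ≤ k → 0 < μ k ∧ μ k ≤ μ₀) →
          ¬ Summable (fun k : ℕ => μ (k + 1)) →
          ∀ e : ℕ → Ω' → Fin M → ℝ,
            (∀ k, 1 ≤ k → ∀ ω, e k ω =
                (1 - μ k • ((B + γ • C)⁻¹ * (A + W k ω))).mulVec (e (k - 1) ω)
                  + μ k • (B + γ • C)⁻¹.mulVec (θ k ω - (W k ω).mulVec uhat)) →
            (∀ k, 1 ≤ k →
                IndepFun (fun ω => (θ k ω, W k ω)) (fun ω => e (k - 1) ω) P) →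
            (∀ k, IntV P (e k)) →
            (∀ k, 1 ≤ k → IntV P (fun ω => (W k ω).mulVec (e (k - 1) ω))) →
            ∀ i : Fin M, Tendsto (fun k : ℕ => ∫ ω, e k ω i ∂P) atTop (nhds 0) := by
  classical
  rcases Nat.eq_zero_or_pos M with hM0 | hMpos
  · subst hM0
    refine ⟨1, one_pos, 1, one_pos, fun γ _ _ => ⟨?_, ?_⟩⟩
    · exact (Matrix.isUnit_iff_isUnit_det _).2 (by simp [Matrix.det_fin_zero])
    · intro μ _ _ e _ _ _ _ i
      exact i.elim0
  · have hBdet : IsUnit B.det := (Matrix.isUnit_iff_isUnit_det B).1 hBinv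
    obtain ⟨lam, hlam, hquad0⟩ := exists_lam hMpos (B⁻¹ * A) hBA
    set ε : ℝ := lam / (2 * ((M:ℝ) + 1)) with hεdef
    have hε : 0 < ε := by positivity
    obtain ⟨γ₀, hγ₀, hγprop⟩ := exists_gamma_bound B C A hBdet ε hε
    set K : ℝ := ∑ i, ∑ j, ((B⁻¹ * A) i j)^2 with hKdef
    have hK0 : 0 ≤ K := Finset.sum_nonneg fun i _ => sum_sq_nonneg' _
    set L : ℝ := 2*K + 2*ε^2*(M:ℝ)^2 + 1 with hLdef
    have hLpos : 0 < L := by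
      have h2 : (0:ℝ) ≤ ε^2*(M:ℝ)^2 := by positivity
      rw [hLdef]
      linarith
    set lam' : ℝ := lam / 2 with hlam2
    have hlam' : 0 < lam' := by positivity
    set μ₀ : ℝ := lam' / L with hμ₀def
    refine ⟨γ₀, hγ₀, μ₀, by positivity, ?_⟩
    intro γ hγ0 hγγ₀
    obtain ⟨hdetu, hentries⟩ := hγprop γ hγ0 hγγ₀
    refine ⟨(Matrix.isUnit_iff_isUnit_det _).2 hdetu, ?_⟩
    intro μ hμ hnotsum e he hindep heint _hWe
    set Ψ : Matrix (Fin M) (Fin M) ℝ := (B + γ • C)⁻¹ with hΨdef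
    set G : Matrix (Fin M) (Fin M) ℝ := Ψ * A with hGdef
    have hquadG : ∀ x : Fin M → ℝ, lam' * ∑ i, (x i)^2 ≤ x ⬝ᵥ G.mulVec x := by
      intro x
      have hD := quadform_abs_le (D := G - B⁻¹ * A) (ε := ε)
        (fun i j => by simpa [Matrix.sub_apply] using hentries i j) x
      have hsplit : x ⬝ᵥ G.mulVec x
          = x ⬝ᵥ (B⁻¹ * A).mulVec x + x ⬝ᵥ (G - B⁻¹ * A).mulVec x := by
        rw [Matrix.sub_mulVec, dotProduct_sub]
        ring
      have hεM : ε * (M:ℝ) ≤ lam / 2 := by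
        rw [hεdef]
        rw [div_mul_eq_mul_div, div_le_div_iff₀ (by positivity) (by norm_num)]
        nlinarith [hlam.le]
      have habs := abs_le.1 hD
      have hmul := mul_le_mul_of_nonneg_right hεM (sum_sq_nonneg' x)
      have hq0 := hquad0 x
      rw [hsplit, hlam2]
      linarith [habs.1]
    have hLG : ∑ i, ∑ j, (G i j)^2 ≤ L := by
      have hstep1 : ∑ i, ∑ j, (G i j)^2
          ≤ ∑ i : Fin M, ∑ j : Fin M, (2*((B⁻¹ * A) i j)^2 + 2*ε^2) := by
        refine Finset.sum_le_sum fun i _ => Finset.sum_le_sum fun j _ => ?_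
        have h1 := hentries i j
        have h2 : |G i j - (B⁻¹ * A) i j| ≤ ε := by
          simpa [Matrix.sub_apply] using hentries i j
        have hd2 : (G i j - (B⁻¹ * A) i j)^2 ≤ ε^2 := by
          rw [← sq_abs]
          exact pow_le_pow_left₀ (abs_nonneg _) h2 2
        nlinarith [hd2, sq_nonneg (G i j - 2*((B⁻¹ * A) i j))]
      have hstep2 : ∑ i : Fin M, ∑ j : Fin M, (2*((B⁻¹ * A) i j)^2 + 2*ε^2)
          = 2*K + 2*ε^2*(M:ℝ)^2 := by
        rw [hKdef]
        simp [Finset.sum_add_distrib, Finset.mul_sum, Finset.sum_const, Finset.card_univ]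
        ring
      rw [hLdef]
      linarith [hstep1, hstep2.le, hstep2.ge]
    have hm : ∀ k, 1 ≤ k → Evec P (e k)
        = ((1 : Matrix (Fin M) (Fin M) ℝ) - μ k • G).mulVec (Evec P (e (k-1))) := by
      intro k hk
      exact Evec_rec P Ψ A uhat (θ k) (W k) (e (k-1)) (e k) (μ k) (hθint k) (hθmean k hk)
        (hWint k) (hWmean k hk) (fun ω => he k hk ω) (hindep k hk) (heint (k-1))
    set S : ℕ → ℝ := fun k => ∑ i, ((Evec P (e k)) i)^2 with hSdef
    have hstep : ∀ k, 1 ≤ k → S k ≤ (1 - μ k * lam') * S (k-1) := by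
      intro k hk
      have hμkL : μ k * L ≤ lam' := by
        have h1 := (hμ k hk).2
        have h2 : μ k * L ≤ μ₀ * L :=
          mul_le_mul_of_nonneg_right h1 hLpos.le
        calc μ k * L ≤ μ₀ * L := h2
          _ = lam' := by rw [hμ₀def]; field_simp
      have hsi := step_ineq G lam' L (μ k) hquadG hLG (hμ k hk).1.le hμkL (Evec P (e (k-1)))
      calc S k = ∑ i, (((1 : Matrix (Fin M) (Fin M) ℝ) - μ k • G).mulVec
            (Evec P (e (k-1))) i)^2 := by rw [hSdef]; simp only; rw [hm k hk]
        _ ≤ (1 - μ k * lam') * ∑ i, ((Evec P (e (k-1))) i)^2 := hsi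
        _ = (1 - μ k * lam') * S (k-1) := by rw [hSdef]
    have hdecay : ∀ n, S n ≤ S 0 * Real.exp (-(lam' * ∑ j ∈ Finset.range n, μ (j+1))) := by
      intro n
      induction n with
      | zero => simp
      | succ n ih =>
        have h1 : S (n+1) ≤ (1 - μ (n+1) * lam') * S n := by
          have := hstep (n+1) (Nat.le_add_left 1 n)
          simpa using this
        have hSn : 0 ≤ S n := sum_sq_nonneg' _
        have h2 : (1 - μ (n+1) * lam') ≤ Real.exp (-(μ (n+1) * lam')) := by
          have := Real.add_one_le_exp (-(μ (n+1) * lam'))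
          linarith
        calc S (n+1) ≤ (1 - μ (n+1) * lam') * S n := h1
          _ ≤ Real.exp (-(μ (n+1) * lam')) * S n := mul_le_mul_of_nonneg_right h2 hSn
          _ ≤ Real.exp (-(μ (n+1) * lam'))
              * (S 0 * Real.exp (-(lam' * ∑ j ∈ Finset.range n, μ (j+1)))) :=
            mul_le_mul_of_nonneg_left ih (Real.exp_pos _).le
          _ = S 0 * Real.exp (-(lam' * ∑ j ∈ Finset.range (n+1), μ (j+1))) := by
            have hco : Real.exp (-(μ (n+1) * lam'))
                * (S 0 * Real.exp (-(lam' * ∑ j ∈ Finset.range n, μ (j+1))))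
                = S 0 * Real.exp (-(lam' * ∑ j ∈ Finset.range n, μ (j+1))
                    + -(μ (n+1) * lam')) := by
              rw [Real.exp_add]; ring
            rw [Finset.sum_range_succ, hco]
            congr 2
            ring
    have hμpos : ∀ j : ℕ, 0 ≤ μ (j+1) := fun j => (hμ (j+1) (Nat.le_add_left 1 j)).1.le
    have hdiv : Tendsto (fun n => ∑ j ∈ Finset.range n, μ (j+1)) atTop atTop :=
      (not_summable_iff_tendsto_nat_atTop_of_nonneg hμpos).1 hnotsum
    have hexp : Tendsto (fun n => S 0 * Real.exp (-(lam' * ∑ j ∈ Finset.range n, μ (j+1))))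
        atTop (nhds 0) := by
      have h1 : Tendsto (fun n => -(lam' * ∑ j ∈ Finset.range n, μ (j+1))) atTop atBot :=
        tendsto_neg_atTop_atBot.comp (hdiv.const_mul_atTop hlam')
      have h2 := Real.tendsto_exp_atBot.comp h1
      have h3 := h2.const_mul (S 0)
      simpa [Function.comp] using h3
    have hS0 : Tendsto S atTop (nhds 0) :=
      squeeze_zero (fun n => sum_sq_nonneg' _) hdecay hexp
    intro i
    have hbound : ∀ n : ℕ, ‖(∫ ω, e n ω i ∂P)‖ ≤ Real.sqrt (S n) := by
      intro n
      rw [Real.norm_eq_abs, ← Real.sqrt_sq_eq_abs]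
      apply Real.sqrt_le_sqrt
      exact Finset.single_le_sum (f := fun i => ((Evec P (e n)) i)^2)
        (fun _ _ => sq_nonneg _) (Finset.mem_univ i)
    have hsqrt : Tendsto (fun n => Real.sqrt (S n)) atTop (nhds 0) := by
      have := (Real.continuous_sqrt.tendsto 0).comp hS0
      simpa [Function.comp_def] using this
    exact squeeze_zero_norm hbound hsqrt
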